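/- Suppose X, W ∈ ℝ^{2×2} are symmetric positive definite, Y ∈ ℝ^{1×2}, and γ > 0 are such that the robust LMIs hold. Then for every η in the uncertainty simplex Ω, every solution x of the closed-loop delay system for η with feedback F = YX⁻¹ converges to zero: ‖x(t)‖ → 0 as t → ∞. -/

import Mathlib

open Matrix

noncomputable section

/-- A real matrix is negative definite if its negation is positive definite. -/
def NegDef {n : Type*} [Fintype n] (M : Matrix n n ℝ) : Prop := (-M).PosDef

/-- The robust LMIs: for every vertex `i`, the block matrix
`[[Θ_i, A_dX, Γ],[XA_dᵀ, −W, 0],[Γᵀ, 0, −γI_q]]` is negative definite, where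
`Θ_i = A_iX + XA_iᵀ + B_iY + YᵀB_iᵀ + W` and `Γ = XGᵀ + YᵀHᵀ`. -/
def RobustLMI (μ q : ℕ) (A : Fin μ → Matrix (Fin 2) (Fin 2) ℝ)
    (B : Fin μ → Matrix (Fin 2) (Fin 1) ℝ) (Ad : Matrix (Fin 2) (Fin 2) ℝ)
    (G : Matrix (Fin q) (Fin 2) ℝ) (H : Matrix (Fin q) (Fin 1) ℝ)
    (X W : Matrix (Fin 2) (Fin 2) ℝ) (Y : Matrix (Fin 1) (Fin 2) ℝ) (γ : ℝ) : Prop :=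
  ∀ i : Fin μ,
    NegDef (Matrix.fromBlocks
      (Matrix.fromBlocks
        (A i * X + X * (A i)ᵀ + B i * Y + Yᵀ * (B i)ᵀ + W) (Ad * X)
        (X * Adᵀ) (-W))
      (Matrix.fromRows (X * Gᵀ + Yᵀ * Hᵀ) 0)
      (Matrix.fromCols (X * Gᵀ + Yᵀ * Hᵀ)ᵀ 0)
      (-(γ • (1 : Matrix (Fin q) (Fin q) ℝ))))

/-- Membership in the uncertainty simplex `Ω`. -/
def InSimplex (μ : ℕ) (η : Fin μ → ℝ) : Prop :=
  (∀ i, 0 ≤ η i) ∧ ∑ i, η i = 1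

/-- `x` is a solution of the closed-loop delay system
`x'(t) = (A(η) + B(η)F)x(t) + A_d x(t−τ)` for `t ≥ 0`, continuous on `[−τ,∞)`,
where `A(η) = Σᵢ ηᵢAᵢ` and `B(η) = Σᵢ ηᵢBᵢ`. -/
def IsClosedLoopSolution (μ : ℕ) (A : Fin μ → Matrix (Fin 2) (Fin 2) ℝ)
    (B : Fin μ → Matrix (Fin 2) (Fin 1) ℝ) (Ad : Matrix (Fin 2) (Fin 2) ℝ)
    (F : Matrix (Fin 1) (Fin 2) ℝ) (τ : ℝ) (η : Fin μ → ℝ)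
    (x : ℝ → EuclideanSpace ℝ (Fin 2)) : Prop :=
  ContinuousOn x (Set.Ici (-τ)) ∧
    ∀ t ≥ (0:ℝ), HasDerivAt x
      ((WithLp.toLp 2 (((∑ i, η i • A i) + (∑ i, η i • B i) * F) *ᵥ (x t) + Ad *ᵥ (x (t - τ))) :
        EuclideanSpace ℝ (Fin 2))) t

namespace RASaux

lemma ct_eq_transpose {n m : Type*} (M : Matrix n m ℝ) : Mᴴ = Mᵀ := by
  ext i j; simp [conjTranspose]

variable {n : Type*} [Fintype n]

/-- quadratic upper bound -/
lemma quad_le (S : Matrix n n ℝ) (v : n → ℝ) :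
    v ⬝ᵥ S *ᵥ v ≤ (∑ i, ∑ j, |S i j|) * (v ⬝ᵥ v) := by
  have hvv : ∀ k, v k ^ 2 ≤ v ⬝ᵥ v := by
    intro k
    have : v ⬝ᵥ v = ∑ i, v i ^ 2 := by simp [dotProduct, sq]
    rw [this]
    exact Finset.single_le_sum (fun i (_ : i ∈ Finset.univ) => sq_nonneg (v i)) (Finset.mem_univ k)
  have key : ∀ i j, v i * (S i j * v j) ≤ |S i j| * (v ⬝ᵥ v) := by
    intro i j
    have h1 := hvv i; have h2 := hvv j
    have habs : |v i * v j| ≤ v ⬝ᵥ v := by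
      rw [abs_le]
      constructor <;> nlinarith [sq_nonneg (v i + v j), sq_nonneg (v i - v j)]
    calc v i * (S i j * v j) ≤ |v i * (S i j * v j)| := le_abs_self _
      _ = |S i j| * |v i * v j| := by rw [abs_mul, abs_mul, abs_mul]; ring
      _ ≤ |S i j| * (v ⬝ᵥ v) := by
          exact mul_le_mul_of_nonneg_left habs (abs_nonneg _)
  calc v ⬝ᵥ S *ᵥ v = ∑ i, ∑ j, v i * (S i j * v j) := by
        simp [dotProduct, mulVec, Finset.mul_sum]
    _ ≤ ∑ i, ∑ j, |S i j| * (v ⬝ᵥ v) :=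
        Finset.sum_le_sum fun i _ => Finset.sum_le_sum fun j _ => key i j
    _ = (∑ i, ∑ j, |S i j|) * (v ⬝ᵥ v) := by rw [Finset.sum_mul]; simp [Finset.sum_mul]

lemma quad_continuous (S : Matrix n n ℝ) :
    Continuous (fun v : EuclideanSpace ℝ n => v ⬝ᵥ S *ᵥ v) := by
  have h : ∀ i : n, Continuous (fun v : EuclideanSpace ℝ n => v i) :=
    fun i => (EuclideanSpace.proj (𝕜 := ℝ) i).continuous
  have : (fun v : EuclideanSpace ℝ n => v ⬝ᵥ S *ᵥ v)
      = fun v : EuclideanSpace ℝ n => ∑ i, v i * ∑ j, S i j * v j := by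
    funext v; simp [dotProduct, mulVec]
  rw [this]
  exact continuous_finset_sum _ fun i _ =>
    (h i).mul (continuous_finset_sum _ fun j _ => continuous_const.mul (h j))

lemma dot_self_eq_normsq (v : EuclideanSpace ℝ n) : v ⬝ᵥ v = ‖v‖ ^ 2 := by
  rw [EuclideanSpace.norm_sq_eq]
  simp [dotProduct, sq]

lemma posdef_lower [Nonempty n] {S : Matrix n n ℝ} (hS : S.PosDef) :
    ∃ ε > 0, ∀ v : n → ℝ, ε * (v ⬝ᵥ v) ≤ v ⬝ᵥ S *ᵥ v := by
  classical
  obtain ⟨i0⟩ := (inferInstance : Nonempty n)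
  set f : EuclideanSpace ℝ n → ℝ := fun v => v ⬝ᵥ S *ᵥ v with hf
  have hcont : Continuous f := quad_continuous S
  have hsph : (Metric.sphere (0 : EuclideanSpace ℝ n) 1).Nonempty := by
    refine ⟨EuclideanSpace.single i0 (1 : ℝ), ?_⟩
    simp [EuclideanSpace.norm_single]
  obtain ⟨u0, hu0mem, hu0min⟩ :=
    (isCompact_sphere (0 : EuclideanSpace ℝ n) 1).exists_isMinOn hsph hcont.continuousOn
  have hu0norm : ‖u0‖ = 1 := by simpa using hu0mem
  have hu0ne : u0 ≠ 0 := by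
    intro h; rw [h] at hu0norm; simp at hu0norm
  have hεpos : 0 < f u0 := by
    have := hS.dotProduct_mulVec_pos (x := (u0 : n → ℝ)) (by simpa using hu0ne)
    simpa [hf] using this
  refine ⟨f u0, hεpos, fun v => ?_⟩
  by_cases hv : v = 0
  · simp [hv, dotProduct]
  · set w : EuclideanSpace ℝ n := WithLp.toLp 2 v with hw
    have hwne : w ≠ 0 := fun h => hv (by have := congrArg WithLp.ofLp h; simpa [hw] using this)
    have hnorm : 0 < ‖w‖ := norm_pos_iff.mpr hwne
    set u : EuclideanSpace ℝ n := ‖w‖⁻¹ • w with hu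
    have humem : u ∈ Metric.sphere (0 : EuclideanSpace ℝ n) 1 := by
      simp [hu, norm_smul, abs_of_pos (inv_pos.mpr hnorm), inv_mul_cancel₀ hnorm.ne']
    have hmin := hu0min humem
    have hscale : f u = ‖w‖⁻¹ ^ 2 * f w := by
      simp only [hf, hu]
      have : (‖w‖⁻¹ • w : EuclideanSpace ℝ n) ⬝ᵥ S *ᵥ (‖w‖⁻¹ • w : EuclideanSpace ℝ n)
          = ‖w‖⁻¹ * (‖w‖⁻¹ * ((w : n → ℝ) ⬝ᵥ S *ᵥ (w : n → ℝ))) := by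
        rw [show ((‖w‖⁻¹ • w : EuclideanSpace ℝ n) : n → ℝ) = ‖w‖⁻¹ • (w : n → ℝ) from rfl]
        rw [smul_dotProduct, mulVec_smul, dotProduct_smul]
        simp [smul_eq_mul]
      rw [this]; ring
    have hle : f u0 ≤ ‖w‖⁻¹ ^ 2 * f w := by rw [← hscale]; exact hmin
    have hvv : v ⬝ᵥ v = ‖w‖ ^ 2 := dot_self_eq_normsq w
    have h2 : f u0 * ‖w‖ ^ 2 ≤ f w := by
      have := mul_le_mul_of_nonneg_right hle (sq_nonneg ‖w‖)
      calc f u0 * ‖w‖ ^ 2 ≤ ‖w‖⁻¹ ^ 2 * f w * ‖w‖ ^ 2 := this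
        _ = f w := by field_simp
    rw [hvv]; exact h2

lemma posDef_convex {μ : ℕ} {η : Fin μ → ℝ} (h0 : ∀ i, 0 ≤ η i) (h1 : ∑ i, η i = 1)
    {S : Fin μ → Matrix n n ℝ} (hS : ∀ i, (S i).PosDef) :
    (∑ i, η i • S i).PosDef := by
  rw [Matrix.posDef_iff_dotProduct_mulVec]
  constructor
  · apply Matrix.IsHermitian.ext
    intro i j
    simp only [star_trivial, Matrix.sum_apply, Matrix.smul_apply, smul_eq_mul]
    refine Finset.sum_congr rfl fun k _ => ?_
    have hk := (hS k).1.apply i j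
    simp only [star_trivial] at hk
    rw [hk]
  · intro z hz
    have hmv : (∑ i, η i • S i) *ᵥ z = ∑ i, (η i • S i) *ᵥ z :=
      map_sum (Matrix.mulVec.addMonoidHomLeft z) _ _
    have hdot : ∀ (w : n → ℝ) (f : Fin μ → n → ℝ), w ⬝ᵥ ∑ i, f i = ∑ i, w ⬝ᵥ f i := by
      intro w f
      simp only [dotProduct, Finset.sum_apply, Finset.mul_sum]
      exact Finset.sum_comm
    have hformula : star z ⬝ᵥ (∑ i, η i • S i) *ᵥ z
        = ∑ i, η i * (star z ⬝ᵥ (S i) *ᵥ z) := by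
      rw [hmv, hdot]
      exact Finset.sum_congr rfl fun i _ => by
        rw [Matrix.smul_mulVec, dotProduct_smul]; rfl
    rw [hformula]
    have hex : ∃ j, 0 < η j := by
      by_contra h
      push_neg at h
      have : ∀ i, η i = 0 := fun i => le_antisymm (h i) (h0 i)
      simp [this] at h1
    obtain ⟨j, hj⟩ := hex
    refine Finset.sum_pos' (fun i _ => mul_nonneg (h0 i) ((hS i).posSemidef.dotProduct_mulVec_nonneg z)) ?_
    exact ⟨j, Finset.mem_univ j, mul_pos hj ((hS j).dotProduct_mulVec_pos hz)⟩

lemma posDef_block₁₁ {m o : Type*} [Fintype m] [Fintype o]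
    {A : Matrix m m ℝ} {B : Matrix m o ℝ} {C : Matrix o m ℝ} {D : Matrix o o ℝ}
    (h : (fromBlocks A B C D).PosDef) : A.PosDef := by
  rw [Matrix.posDef_iff_dotProduct_mulVec]
  constructor
  · apply Matrix.IsHermitian.ext
    intro i j
    have := h.1.apply (Sum.inl i) (Sum.inl j)
    simpa using this
  · intro v hv
    set z : m ⊕ o → ℝ := Sum.elim v 0 with hzdef
    have hz : z ≠ 0 := by
      intro h'
      apply hv
      funext i
      have := congrFun h' (Sum.inl i)
      simpa [hzdef] using this
    have := h.dotProduct_mulVec_pos hz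
    rw [show z = Sum.elim v 0 from rfl, Matrix.fromBlocks_mulVec] at this
    simpa [Matrix.dotProduct_block] using this

lemma posDef_conj {C S : Matrix n n ℝ} (hS : S.PosDef)
    [DecidableEq n] (hC : IsUnit C.det) : (Cᵀ * S * C).PosDef := by
  rw [Matrix.posDef_iff_dotProduct_mulVec]
  constructor
  · have := Matrix.isHermitian_conjTranspose_mul_mul C hS.1
    rwa [ct_eq_transpose] at this
  · intro v hv
    have : Invertible C := Matrix.invertibleOfIsUnitDet C hC
    have hCv : C *ᵥ v ≠ 0 := by
      intro h
      apply hv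
      have hinj := Matrix.mulVec_injective_of_invertible C
      have h0 : C *ᵥ v = C *ᵥ 0 := by simpa using h
      exact hinj h0
    have hpos := hS.dotProduct_mulVec_pos hCv
    have hrw : star (C *ᵥ v) ⬝ᵥ S *ᵥ (C *ᵥ v) = star v ⬝ᵥ (Cᵀ * S * C) *ᵥ v := by
      rw [star_mulVec, Matrix.dotProduct_mulVec, Matrix.dotProduct_mulVec,
        vecMul_vecMul, vecMul_vecMul, ct_eq_transpose, Matrix.mul_assoc]
      exact (Matrix.dotProduct_mulVec _ _ _).symm
    rwa [hrw] at hpos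

lemma hasDerivAt_quad (S : Matrix n n ℝ) {y : ℝ → EuclideanSpace ℝ n}
    {d : EuclideanSpace ℝ n} {t : ℝ} (hy : HasDerivAt y d t) :
    HasDerivAt (fun s => (y s : n → ℝ) ⬝ᵥ S *ᵥ (y s : n → ℝ))
      ((d : n → ℝ) ⬝ᵥ S *ᵥ (y t : n → ℝ) + (y t : n → ℝ) ⬝ᵥ S *ᵥ (d : n → ℝ)) t := by
  have hcoord : ∀ i : n, HasDerivAt (fun s => (y s : n → ℝ) i) ((d : n → ℝ) i) t := by
    intro i
    exact (EuclideanSpace.proj (𝕜 := ℝ) i).hasFDerivAt.comp_hasDerivAt t hy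
  have hterm : ∀ i j : n, HasDerivAt (fun s => (y s : n → ℝ) i * (S i j * (y s : n → ℝ) j))
      ((d : n → ℝ) i * (S i j * (y t : n → ℝ) j)
        + (y t : n → ℝ) i * (S i j * (d : n → ℝ) j)) t := by
    intro i j
    exact (hcoord i).mul ((hcoord j).const_mul (S i j))
  have hsum : HasDerivAt (fun s => ∑ i, ∑ j, (y s : n → ℝ) i * (S i j * (y s : n → ℝ) j))
      (∑ i, ∑ j, ((d : n → ℝ) i * (S i j * (y t : n → ℝ) j)
        + (y t : n → ℝ) i * (S i j * (d : n → ℝ) j))) t := by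
    exact HasDerivAt.fun_sum fun i _ => HasDerivAt.fun_sum fun j _ => hterm i j
  have hfun : (fun s => ∑ i, ∑ j, (y s : n → ℝ) i * (S i j * (y s : n → ℝ) j))
      = fun s => (y s : n → ℝ) ⬝ᵥ S *ᵥ (y s : n → ℝ) := by
    funext s; simp [dotProduct, mulVec, Finset.mul_sum]
  have hval : (∑ i, ∑ j, ((d : n → ℝ) i * (S i j * (y t : n → ℝ) j)
        + (y t : n → ℝ) i * (S i j * (d : n → ℝ) j)))
      = (d : n → ℝ) ⬝ᵥ S *ᵥ (y t : n → ℝ) + (y t : n → ℝ) ⬝ᵥ S *ᵥ (d : n → ℝ) := by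
    simp only [Finset.sum_add_distrib]
    congr 1 <;> simp [dotProduct, mulVec, Finset.mul_sum]
  rw [← hfun, ← hval]
  exact hsum

lemma sum_fromBlocks {k : ℕ} {n m o p : Type*} [Fintype n] [Fintype m] [Fintype o] [Fintype p]
    (f : Fin k → Matrix n m ℝ) (g : Fin k → Matrix n p ℝ)
    (h : Fin k → Matrix o m ℝ) (l : Fin k → Matrix o p ℝ) :
    ∑ i, fromBlocks (f i) (g i) (h i) (l i)
      = fromBlocks (∑ i, f i) (∑ i, g i) (∑ i, h i) (∑ i, l i) := by
  ext i j
  cases i <;> cases j <;> simp [Matrix.sum_apply]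

theorem key_negdef
    {μ q : ℕ} {A : Fin μ → Matrix (Fin 2) (Fin 2) ℝ} {B : Fin μ → Matrix (Fin 2) (Fin 1) ℝ}
    {Ad : Matrix (Fin 2) (Fin 2) ℝ} {G : Matrix (Fin q) (Fin 2) ℝ} {H : Matrix (Fin q) (Fin 1) ℝ}
    {X W : Matrix (Fin 2) (Fin 2) ℝ} (hX : X.PosDef) {Y : Matrix (Fin 1) (Fin 2) ℝ} {γ : ℝ}
    (hLMI : RobustLMI μ q A B Ad G H X W Y γ)
    {η : Fin μ → ℝ} (h0 : ∀ i, 0 ≤ η i) (h1 : ∑ i, η i = 1) :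
    (-(fromBlocks
        (X⁻¹ * ((∑ i, η i • A i) + (∑ i, η i • B i) * (Y * X⁻¹))
          + ((∑ i, η i • A i) + (∑ i, η i • B i) * (Y * X⁻¹))ᵀ * X⁻¹ + X⁻¹ * W * X⁻¹)
        (X⁻¹ * Ad) (Adᵀ * X⁻¹) (-(X⁻¹ * W * X⁻¹)))).PosDef := by
  classical
  set Aη := ∑ i, η i • A i with hAη
  set Bη := ∑ i, η i • B i with hBη
  set P := X⁻¹ with hP
  set F := Y * X⁻¹ with hF
  set Ac := Aη + Bη * F with hAc
  set Q := P * W * P with hQ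
  set Θη := Aη * X + X * Aηᵀ + Bη * Y + Yᵀ * Bηᵀ + W with hΘη
  set R := Matrix.fromRows (X * Gᵀ + Yᵀ * Hᵀ) (0 : Matrix (Fin 2) (Fin q) ℝ) with hR
  set Cc := Matrix.fromCols (X * Gᵀ + Yᵀ * Hᵀ)ᵀ (0 : Matrix (Fin q) (Fin 2) ℝ) with hCc
  set Dd := (-(γ • (1 : Matrix (Fin q) (Fin q) ℝ))) with hDd
  set N := fromBlocks Θη (Ad * X) (X * Adᵀ) (-W) with hN
  -- Step 1 : convex combination
  have hsumΘ : ∑ i, η i • (A i * X + X * (A i)ᵀ + B i * Y + Yᵀ * (B i)ᵀ + W) = Θη := by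
    simp only [smul_add, Finset.sum_add_distrib]
    have e1 : ∑ i, η i • (A i * X) = Aη * X := by
      rw [hAη, Matrix.sum_mul]
      exact Finset.sum_congr rfl fun i _ => (smul_mul_assoc _ _ _).symm
    have e2 : ∑ i, η i • (X * (A i)ᵀ) = X * Aηᵀ := by
      rw [hAη, Matrix.transpose_sum, Matrix.mul_sum]
      exact Finset.sum_congr rfl fun i _ => by
        rw [Matrix.transpose_smul, mul_smul_comm]
    have e3 : ∑ i, η i • (B i * Y) = Bη * Y := by
      rw [hBη, Matrix.sum_mul]
      exact Finset.sum_congr rfl fun i _ => (Matrix.smul_mul _ _ _).symm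
    have e4 : ∑ i, η i • (Yᵀ * (B i)ᵀ) = Yᵀ * Bηᵀ := by
      rw [hBη, Matrix.transpose_sum, Matrix.mul_sum]
      exact Finset.sum_congr rfl fun i _ => by
        rw [Matrix.transpose_smul, Matrix.mul_smul]
    have e5 : ∑ i, η i • W = W := by
      rw [← Finset.sum_smul, h1, one_smul]
    rw [e1, e2, e3, e4, e5, hΘη]
  have hBigSum : ∑ i, η i •
      (-(Matrix.fromBlocks
        (Matrix.fromBlocks
          (A i * X + X * (A i)ᵀ + B i * Y + Yᵀ * (B i)ᵀ + W) (Ad * X)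
          (X * Adᵀ) (-W)) R Cc Dd))
      = -(Matrix.fromBlocks N R Cc Dd) := by
    have : ∀ i : Fin μ, η i •
        (-(Matrix.fromBlocks
          (Matrix.fromBlocks
            (A i * X + X * (A i)ᵀ + B i * Y + Yᵀ * (B i)ᵀ + W) (Ad * X)
            (X * Adᵀ) (-W)) R Cc Dd))
        = -(Matrix.fromBlocks
          (η i • Matrix.fromBlocks
            (A i * X + X * (A i)ᵀ + B i * Y + Yᵀ * (B i)ᵀ + W) (Ad * X)
            (X * Adᵀ) (-W)) (η i • R) (η i • Cc) (η i • Dd)) := by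
      intro i
      rw [smul_neg, Matrix.fromBlocks_smul]
    rw [Finset.sum_congr rfl fun i _ => this i]
    rw [Finset.sum_neg_distrib]
    congr 1
    have this2 : ∀ i : Fin μ, η i • Matrix.fromBlocks
          (A i * X + X * (A i)ᵀ + B i * Y + Yᵀ * (B i)ᵀ + W) (Ad * X)
          (X * Adᵀ) (-W)
        = Matrix.fromBlocks
          (η i • (A i * X + X * (A i)ᵀ + B i * Y + Yᵀ * (B i)ᵀ + W)) (η i • (Ad * X))
          (η i • (X * Adᵀ)) (η i • (-W)) := fun i => Matrix.fromBlocks_smul _ _ _ _ _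
    have hsmul : ∀ {n' m' : Type} (M : Matrix n' m' ℝ), ∑ i, η i • M = M := by
      intro n' m' M
      rw [← Finset.sum_smul, h1, one_smul]
    rw [sum_fromBlocks]
    rw [Finset.sum_congr rfl fun i _ => this2 i]
    rw [sum_fromBlocks, hsumΘ, hsmul (Ad * X), hsmul (X * Adᵀ), hsmul (-W),
      hsmul R, hsmul Cc, hsmul Dd, hN]
  have hBigPos : (-(Matrix.fromBlocks N R Cc Dd)).PosDef := by
    rw [← hBigSum]
    exact posDef_convex h0 h1 fun i => hLMI i
  -- Step 2 : extract the 4x4 block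
  have hNneg : (-N).PosDef := by
    have : -(Matrix.fromBlocks N R Cc Dd) = Matrix.fromBlocks (-N) (-R) (-Cc) (-Dd) :=
      Matrix.fromBlocks_neg _ _ _ _
    rw [this] at hBigPos
    exact posDef_block₁₁ hBigPos
  -- Step 3 : congruence
  have hXdet : IsUnit X.det := (Matrix.isUnit_iff_isUnit_det X).mp hX.isUnit
  have hXP : X * P = 1 := Matrix.mul_nonsing_inv X hXdet
  have hPX : P * X = 1 := Matrix.nonsing_inv_mul X hXdet
  have hPdet : IsUnit P.det := by
    have := hX.inv.det_pos
    exact isUnit_iff_ne_zero.mpr (ne_of_gt this)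
  have hXT : Xᵀ = X := by
    have h2 := hX.1.eq
    rwa [ct_eq_transpose] at h2
  have hPT : Pᵀ = P := by
    rw [hP, Matrix.transpose_nonsing_inv, hXT]
  set C2 : Matrix (Fin 2 ⊕ Fin 2) (Fin 2 ⊕ Fin 2) ℝ := fromBlocks P 0 0 P with hC2
  have hC2det : IsUnit C2.det := by
    rw [hC2, Matrix.det_fromBlocks_zero₂₁]
    exact hPdet.mul hPdet
  have hconj : (C2ᵀ * (-N) * C2).PosDef := posDef_conj hNneg hC2det
  have hblocks : C2ᵀ * (-N) * C2
      = -(fromBlocks (P * Ac + Acᵀ * P + Q) (P * Ad) (Adᵀ * P) (-Q)) := by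
    have hC2T : C2ᵀ = fromBlocks P 0 0 P := by
      rw [hC2, Matrix.fromBlocks_transpose, hPT, Matrix.transpose_zero]
    rw [Matrix.mul_neg, Matrix.neg_mul, hC2T, hC2, hN]
    congr 1
    rw [Matrix.fromBlocks_multiply, Matrix.fromBlocks_multiply]
    have b11 : P * Θη * P = P * Ac + Acᵀ * P + Q := by
      rw [hΘη]
      have t1 : P * (Aη * X + X * Aηᵀ + Bη * Y + Yᵀ * Bηᵀ + W) * P
          = P * (Aη * X) * P + P * (X * Aηᵀ) * P + P * (Bη * Y) * P
            + P * (Yᵀ * Bηᵀ) * P + P * W * P := by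
        simp only [Matrix.mul_add, Matrix.add_mul]
      rw [t1]
      have u1 : P * (Aη * X) * P = P * Aη := by
        rw [← Matrix.mul_assoc, Matrix.mul_assoc (P * Aη) X P, hXP, Matrix.mul_one]
      have u2 : P * (X * Aηᵀ) * P = Aηᵀ * P := by
        rw [← Matrix.mul_assoc P X Aηᵀ, hPX, Matrix.one_mul]
      have u3 : P * (Bη * Y) * P = P * (Bη * F) := by
        rw [hF, ← hP]
        simp [Matrix.mul_assoc]
      have u4 : P * (Yᵀ * Bηᵀ) * P = (Bη * F)ᵀ * P := by
        rw [Matrix.transpose_mul, hF, ← hP, Matrix.transpose_mul, hPT]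
        simp [Matrix.mul_assoc]
      rw [u1, u2, u3, u4, hAc, hQ]
      rw [Matrix.mul_add, Matrix.transpose_add, Matrix.add_mul]
      abel
    have b12 : P * (Ad * X) * P = P * Ad := by
      rw [← Matrix.mul_assoc, Matrix.mul_assoc (P * Ad) X P, hXP, Matrix.mul_one]
    have b21 : P * (X * Adᵀ) * P = Adᵀ * P := by
      rw [← Matrix.mul_assoc P X Adᵀ, hPX, Matrix.one_mul]
    have b22 : P * (-W) * P = -Q := by
      rw [Matrix.mul_neg, Matrix.neg_mul, hQ]
    simp only [Matrix.zero_mul, Matrix.mul_zero, add_zero, zero_add]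
    rw [b11, b12, b21, b22]
  rw [hblocks] at hconj
  exact hconj

lemma quad_identity (P Q Ac Ad : Matrix (Fin 2) (Fin 2) ℝ) (v w : Fin 2 → ℝ) :
    ((Ac *ᵥ v + Ad *ᵥ w) ⬝ᵥ P *ᵥ v + v ⬝ᵥ P *ᵥ (Ac *ᵥ v + Ad *ᵥ w))
      + (v ⬝ᵥ Q *ᵥ v - w ⬝ᵥ Q *ᵥ w)
    = Sum.elim v w ⬝ᵥ
        (fromBlocks (P * Ac + Acᵀ * P + Q) (P * Ad) (Adᵀ * P) (-Q)) *ᵥ Sum.elim v w := by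
  have htr : ∀ (M : Matrix (Fin 2) (Fin 2) ℝ) (a b : Fin 2 → ℝ),
      a ⬝ᵥ (Mᵀ *ᵥ b) = (M *ᵥ a) ⬝ᵥ b := by
    intro M a b
    rw [Matrix.dotProduct_mulVec, Matrix.vecMul_transpose]
  rw [Matrix.fromBlocks_mulVec, sumElim_dotProduct_sumElim]
  simp only [Sum.elim_comp_inl, Sum.elim_comp_inr, Matrix.add_mulVec, Matrix.neg_mulVec,
    dotProduct_add, dotProduct_neg, add_dotProduct, ← Matrix.mulVec_mulVec, Matrix.mulVec_add, htr]
  ring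

end RASaux

set_option maxHeartbeats 1000000 in
/-- under the robust LMIs, every closed-loop solution (for any `η`
in the uncertainty simplex) converges to zero. -/
theorem robust_asymptotic_stability
    (μ q : ℕ) (hμ : 1 ≤ μ)
    (A : Fin μ → Matrix (Fin 2) (Fin 2) ℝ) (B : Fin μ → Matrix (Fin 2) (Fin 1) ℝ)
    (Ad : Matrix (Fin 2) (Fin 2) ℝ)
    (G : Matrix (Fin q) (Fin 2) ℝ) (H : Matrix (Fin q) (Fin 1) ℝ)
    (τ : ℝ) (hτ : 0 < τ)
    (X W : Matrix (Fin 2) (Fin 2) ℝ) (hX : X.PosDef) (hW : W.PosDef)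
    (Y : Matrix (Fin 1) (Fin 2) ℝ) (γ : ℝ) (hγ : 0 < γ)
    (hLMI : RobustLMI μ q A B Ad G H X W Y γ)
    (η : Fin μ → ℝ) (hη : InSimplex μ η)
    (x : ℝ → EuclideanSpace ℝ (Fin 2))
    (hx : IsClosedLoopSolution μ A B Ad (Y * X⁻¹) τ η x) :
    Filter.Tendsto (fun t => ‖x t‖) Filter.atTop (nhds 0) := by
  classical
  obtain ⟨hxc, hxd⟩ := hx
  obtain ⟨hη0, hη1⟩ := hη
  -- matrix data
  set Ac := (∑ i, η i • A i) + (∑ i, η i • B i) * (Y * X⁻¹) with hAcdef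
  set P := X⁻¹ with hPdef
  set Q := P * W * P with hQdef
  have hP : P.PosDef := hX.inv
  have hXT : Xᵀ = X := by
    have h2 := hX.1.eq
    rwa [RASaux.ct_eq_transpose] at h2
  have hPT : Pᵀ = P := by rw [hPdef, Matrix.transpose_nonsing_inv, hXT]
  have hPdet : IsUnit P.det := isUnit_iff_ne_zero.mpr (ne_of_gt hP.det_pos)
  have hQ : Q.PosDef := by
    have h := RASaux.posDef_conj hW hPdet
    rwa [hPT] at h
  have hM' : (-(fromBlocks (P * Ac + Acᵀ * P + Q) (P * Ad) (Adᵀ * P) (-Q))).PosDef :=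
    RASaux.key_negdef hX hLMI hη0 hη1
  haveI : Nonempty (Fin 2 ⊕ Fin 2) := ⟨Sum.inl 0⟩
  obtain ⟨ε, hεpos, hMb⟩ := RASaux.posdef_lower hM'
  obtain ⟨εP, hεPpos, hPlow⟩ := RASaux.posdef_lower hP
  -- generic positivity helpers
  have hdotnn : ∀ (u : Fin 2 → ℝ), 0 ≤ u ⬝ᵥ u := fun u =>
    Finset.sum_nonneg fun i _ => mul_self_nonneg _
  have hquadnn : ∀ (S : Matrix (Fin 2) (Fin 2) ℝ), S.PosSemidef →
      ∀ u : Fin 2 → ℝ, 0 ≤ u ⬝ᵥ S *ᵥ u := by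
    intro S hS u
    simpa using hS.dotProduct_mulVec_nonneg u
  set CP := (∑ i, ∑ j, |P i j|) + 1 with hCPdef
  have hCPpos : 0 < CP := by
    have h : 0 ≤ ∑ i, ∑ j, |P i j| :=
      Finset.sum_nonneg fun i _ => Finset.sum_nonneg fun j _ => abs_nonneg _
    rw [hCPdef]; linarith
  have hgub : ∀ u : Fin 2 → ℝ, u ⬝ᵥ P *ᵥ u ≤ CP * (u ⬝ᵥ u) := by
    intro u
    have h1 := RASaux.quad_le P u
    have h2 := hdotnn u
    rw [hCPdef]; nlinarith
  set CQ := ∑ i, ∑ j, |Q i j| with hCQdef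
  have hCQnn : 0 ≤ CQ :=
    Finset.sum_nonneg fun i _ => Finset.sum_nonneg fun j _ => abs_nonneg _
  -- trajectory
  set y : ℝ → EuclideanSpace ℝ (Fin 2) := fun t => x (max t (-τ)) with hydef
  have hyeq : ∀ t, -τ ≤ t → y t = x t := by
    intro t ht
    rw [hydef]
    simp [max_eq_left ht]
  have hyc : Continuous y := by
    rw [hydef]
    exact hxc.comp_continuous (continuous_id.max continuous_const)
      fun t => Set.mem_Ici.mpr (le_max_right _ _)
  set g : ℝ → ℝ := fun t => (y t : Fin 2 → ℝ) ⬝ᵥ P *ᵥ (y t : Fin 2 → ℝ) with hgdef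
  set f : ℝ → ℝ := fun t => (y t : Fin 2 → ℝ) ⬝ᵥ Q *ᵥ (y t : Fin 2 → ℝ) with hfdef
  set nn : ℝ → ℝ := fun t => (y t : Fin 2 → ℝ) ⬝ᵥ (y t : Fin 2 → ℝ) with hnndef
  have hfc : Continuous f := by
    rw [hfdef]; exact (RASaux.quad_continuous Q).comp hyc
  have hnnc : Continuous nn := by
    have h1 : Continuous (fun v : EuclideanSpace ℝ (Fin 2) =>
        v ⬝ᵥ (1 : Matrix (Fin 2) (Fin 2) ℝ) *ᵥ v) := RASaux.quad_continuous 1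
    have h2 : (fun v : EuclideanSpace ℝ (Fin 2) =>
          v ⬝ᵥ (1 : Matrix (Fin 2) (Fin 2) ℝ) *ᵥ v)
        = fun v : EuclideanSpace ℝ (Fin 2) => v ⬝ᵥ v := by
      funext v; rw [Matrix.one_mulVec]
    rw [hnndef]
    exact (h2 ▸ h1).comp hyc
  have hfnn : ∀ t, 0 ≤ f t := fun t => hquadnn Q hQ.posSemidef _
  have hnnnn : ∀ t, 0 ≤ nn t := fun t => hdotnn _
  have hgnn : ∀ t, 0 ≤ g t := fun t => hquadnn P hP.posSemidef _
  have hfub : ∀ t, f t ≤ CQ * nn t := fun t => RASaux.quad_le Q _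
  have hglb : ∀ t, εP * nn t ≤ g t := fun t => hPlow _
  have hgub' : ∀ t, g t ≤ CP * nn t := fun t => hgub _
  -- integrals
  set FI : ℝ → ℝ := fun t => ∫ s in (0:ℝ)..t, f s with hFIdef
  set E : ℝ → ℝ := fun t => ∫ s in (0:ℝ)..t, nn s with hEdef
  have hdecompf : ∀ a b : ℝ, FI b - FI a = ∫ s in a..b, f s := by
    intro a b
    have h := intervalIntegral.integral_add_adjacent_intervals
      (hfc.intervalIntegrable (μ := MeasureTheory.volume) 0 a) (hfc.intervalIntegrable a b)
    simp only [hFIdef]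
    linarith
  have hdecompn : ∀ a b : ℝ, E b - E a = ∫ s in a..b, nn s := by
    intro a b
    have h := intervalIntegral.integral_add_adjacent_intervals
      (hnnc.intervalIntegrable (μ := MeasureTheory.volume) 0 a) (hnnc.intervalIntegrable a b)
    simp only [hEdef]
    linarith
  have hEmono : Monotone E := by
    intro a b hab
    have h := hdecompn a b
    have h2 : 0 ≤ ∫ s in a..b, nn s :=
      intervalIntegral.integral_nonneg hab fun u _ => hnnnn u
    linarith
  have hInn : ∀ t : ℝ, 0 ≤ FI t - FI (t - τ) := by
    intro t
    rw [hdecompf]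
    exact intervalIntegral.integral_nonneg (by linarith) fun u _ => hfnn u
  have hIub : ∀ t : ℝ, FI t - FI (t - τ) ≤ CQ * (E t - E (t - τ)) := by
    intro t
    rw [hdecompf, hdecompn]
    have h1 : (∫ s in (t - τ)..t, f s) ≤ ∫ s in (t - τ)..t, CQ * nn s := by
      apply intervalIntegral.integral_mono_on (by linarith)
        (hfc.intervalIntegrable _ _) ((continuous_const.mul hnnc).intervalIntegrable _ _)
      intro u _
      exact hfub u
    have h2 : (∫ s in (t - τ)..t, CQ * nn s) = CQ * ∫ s in (t - τ)..t, nn s :=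
      intervalIntegral.integral_const_mul _ _
    linarith
  have hE0 : E 0 = 0 := by simp only [hEdef]; simp
  have hEnn : ∀ t, 0 ≤ t → 0 ≤ E t := fun t ht => hE0 ▸ hEmono ht
  -- derivatives
  have hyd : ∀ t, 0 ≤ t →
      HasDerivAt y ((WithLp.toLp 2 (Ac *ᵥ (y t) + Ad *ᵥ (y (t - τ))) : EuclideanSpace ℝ (Fin 2))) t := by
    intro t ht
    have hmem : Set.Ioi (-τ) ∈ nhds t :=
      isOpen_Ioi.mem_nhds (show t ∈ Set.Ioi (-τ) by
        simp only [Set.mem_Ioi]; linarith)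
    have hev : y =ᶠ[nhds t] x :=
      Filter.eventuallyEq_of_mem hmem fun s hs => hyeq s (le_of_lt hs)
    have hd := (hxd t ht).congr_of_eventuallyEq hev
    rw [hyeq t (by linarith), hyeq (t - τ) (by linarith)]
    exact hd
  have hgd : ∀ t, 0 ≤ t → HasDerivAt g
      (((Ac *ᵥ (y t) + Ad *ᵥ (y (t - τ)) : Fin 2 → ℝ)) ⬝ᵥ P *ᵥ (y t : Fin 2 → ℝ)
        + (y t : Fin 2 → ℝ) ⬝ᵥ P *ᵥ ((Ac *ᵥ (y t) + Ad *ᵥ (y (t - τ)) : Fin 2 → ℝ))) t := by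
    intro t ht
    exact RASaux.hasDerivAt_quad P (hyd t ht)
  have hFId : ∀ t : ℝ, HasDerivAt FI (f t) t := fun t =>
    (hfc.integral_hasStrictDerivAt 0 t).hasDerivAt
  have hEd : ∀ t : ℝ, HasDerivAt E (nn t) t := fun t =>
    (hnnc.integral_hasStrictDerivAt 0 t).hasDerivAt
  have hFIshift : ∀ t : ℝ, HasDerivAt (fun u => FI (u - τ)) (f (t - τ)) t := by
    intro t
    have h1 := hFId (t - τ)
    have h2 : HasDerivAt (fun u : ℝ => u - τ) 1 t := (hasDerivAt_id t).sub_const τ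
    have h3 := h1.comp t h2
    rw [mul_one] at h3; exact h3
  set Φ : ℝ → ℝ := fun t => g t + (FI t - FI (t - τ)) + ε * E t with hΦdef
  set D : ℝ → ℝ := fun t =>
      (((Ac *ᵥ (y t) + Ad *ᵥ (y (t - τ)) : Fin 2 → ℝ)) ⬝ᵥ P *ᵥ (y t : Fin 2 → ℝ)
        + (y t : Fin 2 → ℝ) ⬝ᵥ P *ᵥ ((Ac *ᵥ (y t) + Ad *ᵥ (y (t - τ)) : Fin 2 → ℝ)))
      + ((y t : Fin 2 → ℝ) ⬝ᵥ Q *ᵥ (y t : Fin 2 → ℝ)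
        - (y (t - τ) : Fin 2 → ℝ) ⬝ᵥ Q *ᵥ (y (t - τ) : Fin 2 → ℝ))
      + ε * ((y t : Fin 2 → ℝ) ⬝ᵥ (y t : Fin 2 → ℝ)) with hDdef
  have hΦd : ∀ t, 0 ≤ t → HasDerivAt Φ (D t) t := by
    intro t ht
    exact ((hgd t ht).add ((hFId t).sub (hFIshift t))).add ((hEd t).const_mul ε)
  have hDneg : ∀ t, 0 ≤ t → D t ≤ 0 := by
    intro t ht
    have hid := RASaux.quad_identity P Q Ac Ad (y t : Fin 2 → ℝ) (y (t - τ) : Fin 2 → ℝ)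
    have hz := hMb (Sum.elim (y t : Fin 2 → ℝ) (y (t - τ) : Fin 2 → ℝ))
    rw [Matrix.neg_mulVec, dotProduct_neg, sumElim_dotProduct_sumElim] at hz
    have hw := hdotnn (y (t - τ) : Fin 2 → ℝ)
    simp only [hDdef]
    nlinarith [mul_nonneg (le_of_lt hεpos) hw]
  -- Φ is antitone on [0, ∞)
  have hΦcont : ContinuousOn Φ (Set.Ici 0) := fun t ht =>
    ((hΦd t ht).continuousAt).continuousWithinAt
  have hΦanti : AntitoneOn Φ (Set.Ici 0) := by
    refine antitoneOn_of_deriv_nonpos (convex_Ici 0) hΦcont ?_ ?_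
    · intro t ht
      rw [interior_Ici] at ht
      have ht' : (0:ℝ) < t := ht
      exact ((hΦd t (le_of_lt ht')).differentiableAt).differentiableWithinAt
    · intro t ht
      rw [interior_Ici] at ht
      have ht' : (0:ℝ) < t := ht
      rw [(hΦd t (le_of_lt ht')).deriv]
      exact hDneg t (le_of_lt ht')
  have hΦmono : ∀ s t : ℝ, 0 ≤ s → s ≤ t → Φ t ≤ Φ s := by
    intro s t hs hst
    exact hΦanti (Set.mem_Ici.mpr hs) (Set.mem_Ici.mpr (le_trans hs hst)) hst
  have hΦval : ∀ t, Φ t = g t + (FI t - FI (t - τ)) + ε * E t := fun t => rfl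
  -- E is bounded above
  have hEb : ∀ t, 0 ≤ t → ε * E t ≤ Φ 0 := by
    intro t ht
    have h1 := hΦmono 0 t le_rfl ht
    have h2 := hgnn t
    have h3 := hInn t
    rw [hΦval t] at h1
    linarith
  have hEbdd : BddAbove (Set.range E) := by
    refine ⟨Φ 0 / ε, ?_⟩
    rintro r ⟨t, rfl⟩
    have h1 : E t ≤ E (max t 0) := hEmono (le_max_left _ _)
    have h2 := hEb (max t 0) (le_max_right _ _)
    have h3 : E (max t 0) ≤ Φ 0 / ε := by
      rw [le_div_iff₀ hεpos]
      linarith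
    exact le_trans h1 h3
  have hEtend : Filter.Tendsto E Filter.atTop (nhds (⨆ t, E t)) :=
    tendsto_atTop_ciSup hEmono hEbdd
  set SE := ⨆ t, E t with hSEdef
  have hshift : Filter.Tendsto (fun t : ℝ => t - τ) Filter.atTop Filter.atTop := by
    have h := Filter.tendsto_atTop_add_const_right Filter.atTop (-τ)
      (Filter.tendsto_id (x := Filter.atTop (α := ℝ)))
    exact h.congr fun t => by simp only [id_eq]; ring
  have hEshift : Filter.Tendsto (fun t => E (t - τ)) Filter.atTop (nhds SE) :=
    hEtend.comp hshift
  have hEdiff0 : Filter.Tendsto (fun t => E t - E (t - τ)) Filter.atTop (nhds 0) := by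
    have h := hEtend.sub hEshift
    simpa using h
  have hItend : Filter.Tendsto (fun t => FI t - FI (t - τ)) Filter.atTop (nhds 0) := by
    have hup : Filter.Tendsto (fun t => CQ * (E t - E (t - τ))) Filter.atTop (nhds 0) := by
      have h := hEdiff0.const_mul CQ
      simpa using h
    exact tendsto_of_tendsto_of_tendsto_of_le_of_le tendsto_const_nhds hup
      (fun t => hInn t) (fun t => hIub t)
  -- Φ tends to a limit
  have hΦmAnti : Antitone (fun t : ℝ => Φ (max t 0)) := by
    intro a b hab
    exact hΦanti (Set.mem_Ici.mpr (le_max_right a 0)) (Set.mem_Ici.mpr (le_max_right b 0))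
      (max_le_max hab le_rfl)
  have hΦmBdd : BddBelow (Set.range (fun t : ℝ => Φ (max t 0))) := by
    refine ⟨0, ?_⟩
    rintro r ⟨t, rfl⟩
    have h1 := hgnn (max t 0)
    have h2 := hInn (max t 0)
    have h3 := hEnn (max t 0) (le_max_right _ _)
    have h4 := hΦval (max t 0)
    have h5 : 0 ≤ ε * E (max t 0) := mul_nonneg (le_of_lt hεpos) h3
    show 0 ≤ Φ (max t 0)
    linarith
  have hΦmtend : Filter.Tendsto (fun t : ℝ => Φ (max t 0)) Filter.atTop
      (nhds (⨅ t : ℝ, Φ (max t 0))) := tendsto_atTop_ciInf hΦmAnti hΦmBdd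
  set LΦ := ⨅ t : ℝ, Φ (max t 0) with hLΦdef
  have hΦtend : Filter.Tendsto Φ Filter.atTop (nhds LΦ) := by
    apply hΦmtend.congr'
    filter_upwards [Filter.eventually_ge_atTop (0:ℝ)] with t ht
    rw [max_eq_left ht]
  -- g tends to L
  have hgtend : Filter.Tendsto g Filter.atTop (nhds (LΦ - 0 - ε * SE)) := by
    have h1 := (hΦtend.sub hItend).sub (hEtend.const_mul ε)
    apply h1.congr
    intro t
    rw [hΦval t]; ring
  set L := LΦ - 0 - ε * SE with hLdef
  have hL0 : 0 ≤ L := ge_of_tendsto hgtend (Filter.Eventually.of_forall fun t => hgnn t)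
  have hLzero : L = 0 := by
    by_contra hne
    have hLpos : 0 < L := lt_of_le_of_ne hL0 (Ne.symm hne)
    set δ := L / 2 / CP with hδdef
    have hδpos : 0 < δ := div_pos (half_pos hLpos) hCPpos
    have hev1 : ∀ᶠ t in Filter.atTop, L / 2 < g t :=
      hgtend.eventually (lt_mem_nhds (by linarith))
    have hshift1 : Filter.Tendsto (fun t : ℝ => t + 1) Filter.atTop Filter.atTop :=
      Filter.tendsto_atTop_add_const_right Filter.atTop 1
        (Filter.tendsto_id (x := Filter.atTop (α := ℝ)))
    have hev2 : ∀ᶠ t in Filter.atTop, E (t + 1) - E t < δ := by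
      have h1 : Filter.Tendsto (fun t => E (t + 1) - E t) Filter.atTop (nhds 0) := by
        have h := (hEtend.comp hshift1).sub hEtend
        simpa using h
      exact h1.eventually (gt_mem_nhds hδpos)
    obtain ⟨T1, hT1⟩ := Filter.eventually_atTop.mp hev1
    obtain ⟨T2, hT2⟩ := Filter.eventually_atTop.mp hev2
    set t0 := max T1 T2 with ht0def
    have hlow : δ ≤ E (t0 + 1) - E t0 := by
      rw [hdecompn]
      have h1 : (∫ _ in t0..(t0+1), δ) ≤ ∫ s in t0..(t0+1), nn s := by
        apply intervalIntegral.integral_mono_on (by linarith)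
          intervalIntegrable_const (hnnc.intervalIntegrable _ _)
        intro u hu
        have hu1 : T1 ≤ u := le_trans (le_max_left T1 T2) hu.1
        have h2 := hT1 u hu1
        have h3 := hgub' u
        rw [hδdef, div_le_iff₀ hCPpos]
        nlinarith
      have h2 : (∫ _ in t0..(t0+1), (δ:ℝ)) = δ := by
        rw [intervalIntegral.integral_const]
        simp
      linarith
    have hhigh := hT2 t0 (le_max_right T1 T2)
    linarith
  rw [hLzero] at hgtend
  -- nn tends to 0
  have hnntend : Filter.Tendsto nn Filter.atTop (nhds 0) := by
    have hup : Filter.Tendsto (fun t => εP⁻¹ * g t) Filter.atTop (nhds 0) := by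
      have h := hgtend.const_mul εP⁻¹
      rwa [mul_zero] at h
    apply tendsto_of_tendsto_of_tendsto_of_le_of_le tendsto_const_nhds hup
      (fun t => hnnnn t)
    intro t
    have h := hglb t
    have h2 := mul_le_mul_of_nonneg_left h (le_of_lt (inv_pos.mpr hεPpos))
    calc nn t = εP⁻¹ * (εP * nn t) := by field_simp
      _ ≤ εP⁻¹ * g t := h2
  -- conclude
  have hsqrt : Filter.Tendsto (fun t => Real.sqrt (nn t)) Filter.atTop (nhds 0) := by
    have h := (Real.continuous_sqrt.tendsto 0).comp hnntend
    rw [Real.sqrt_zero] at h; exact h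
  apply hsqrt.congr'
  filter_upwards [Filter.eventually_ge_atTop (0:ℝ)] with t ht
  rw [← hyeq t (by linarith)]
  rw [EuclideanSpace.norm_eq]
  simp only [hnndef]
  congr 1
  refine Finset.sum_congr rfl fun i _ => ?_
  rw [Real.norm_eq_abs, sq_abs, sq]
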